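/- Let U and V be closed subspaces of a separable complex Hilbert space H. Then U + V is a closed subspace of H if and only if the cosine of the Friedrichs angle between U and V satisfies c[U,V] < 1, where c[U,V] := sup{|⟨u,v⟩| : u ∈ U⊖V, v ∈ V⊖U, ‖u‖ ≤ 1, ‖v‖ ≤ 1} and U⊖V := U ∩ (U∩V)^⊥. -/

import Mathlib

open scoped ComplexInnerProductSpace


private lemma aux_sq_le {a b : ℝ} (ha : 0 ≤ a) (hb : 0 ≤ b) (h : a ^ 2 ≤ b ^ 2) :
    a ≤ b := by nlinarith

theorem aux_closed_sup {H : Type*} [NormedAddCommGroup H] [InnerProductSpace ℂ H]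
    [CompleteSpace H]
    (A B : Submodule ℂ H) (hA : IsClosed (A : Set H)) (hB : IsClosed (B : Set H))
    (K : NNReal)
    (h : ∀ a ∈ A, ∀ b ∈ B, ‖a‖ ≤ K * ‖a + b‖ ∧ ‖b‖ ≤ K * ‖a + b‖) :
    IsClosed ((A ⊔ B : Submodule ℂ H) : Set H) := by
  haveI : CompleteSpace A := hA.completeSpace_coe
  haveI : CompleteSpace B := hB.completeSpace_coe
  let f : (A × B) →ₗ[ℂ] H :=
    (A.subtype.comp (LinearMap.fst ℂ A B)) + (B.subtype.comp (LinearMap.snd ℂ A B))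
  have hf : ∀ x : A × B, f x = (x.1 : H) + (x.2 : H) := fun x => rfl
  have hfc : UniformContinuous f := by
    simp only [show (f : A × B → H) = fun x => (x.1 : H) + (x.2 : H) from funext hf]
    exact (uniformContinuous_subtype_val.comp uniformContinuous_fst).add
      (uniformContinuous_subtype_val.comp uniformContinuous_snd)
  have hal : AntilipschitzWith K f := by
    refine AntilipschitzWith.of_le_mul_dist fun x y => ?_
    rw [dist_eq_norm, dist_eq_norm, Prod.norm_def]
    have key := h ((x.1 : H) - y.1) (Submodule.sub_mem A x.1.2 y.1.2)
      ((x.2 : H) - y.2) (Submodule.sub_mem B x.2.2 y.2.2)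
    have heq : ((x.1 : H) - y.1) + ((x.2 : H) - y.2) = f x - f y := by
      rw [hf, hf]; abel
    rw [heq] at key
    rw [max_le_iff]
    constructor
    · simpa [AddSubgroupClass.coe_norm, Prod.fst_sub] using key.1
    · simpa [AddSubgroupClass.coe_norm, Prod.snd_sub] using key.2
  have hrange : Set.range f = ((A ⊔ B : Submodule ℂ H) : Set H) := by
    ext z
    simp only [Set.mem_range, SetLike.mem_coe, Submodule.mem_sup]
    constructor
    · rintro ⟨x, rfl⟩; exact ⟨x.1, x.1.2, x.2, x.2.2, (hf x).symm⟩
    · rintro ⟨a, ha, b, hb, rfl⟩; exact ⟨(⟨a, ha⟩, ⟨b, hb⟩), rfl⟩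
  rw [← hrange]
  exact hal.isClosed_range hfc

set_option maxHeartbeats 1000000 in
/-- Let `U` and `V` be closed subspaces of a separable complex Hilbert space
`H`.  Then `U + V` is a closed subspace of `H` if and only if the cosine of the Friedrichs
angle between `U` and `V` satisfies `c[U,V] < 1`, where
`c[U,V] = sup {|⟨u,v⟩| : u ∈ U⊖V, v ∈ V⊖U, ‖u‖ ≤ 1, ‖v‖ ≤ 1}` and `U⊖V = U ∩ (U ∩ V)ᗮ`. -/
theorem stmt_19
    {H : Type*} [NormedAddCommGroup H] [InnerProductSpace ℂ H] [CompleteSpace H]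
    [SecondCountableTopology H]
    (U V : Submodule ℂ H) (hU : IsClosed (U : Set H)) (hV : IsClosed (V : Set H)) :
    IsClosed ((U ⊔ V : Submodule ℂ H) : Set H) ↔
      sSup {r : ℝ | ∃ u ∈ U ⊓ (U ⊓ V)ᗮ, ∃ v ∈ V ⊓ (U ⊓ V)ᗮ,
        ‖u‖ ≤ 1 ∧ ‖v‖ ≤ 1 ∧ r = ‖⟪u, v⟫‖} < 1 := by
  set M : Submodule ℂ H := U ⊓ V with hM
  set U' : Submodule ℂ H := U ⊓ Mᗮ with hU'
  set V' : Submodule ℂ H := V ⊓ Mᗮ with hV'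
  set S : Set ℝ := {r : ℝ | ∃ u ∈ U', ∃ v ∈ V', ‖u‖ ≤ 1 ∧ ‖v‖ ≤ 1 ∧ r = ‖⟪u, v⟫‖} with hS
  have hMc : IsClosed (M : Set H) := hU.inter hV
  haveI : CompleteSpace M := hMc.completeSpace_coe
  have hU'c : IsClosed (U' : Set H) := hU.inter M.isClosed_orthogonal
  have hV'c : IsClosed (V' : Set H) := hV.inter M.isClosed_orthogonal
  set W : Submodule ℂ H := U' ⊔ V' with hW
  have hWMo : W ≤ Mᗮ := sup_le inf_le_right inf_le_right
  -- trivial intersection with M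
  have hMW0 : ∀ x : H, x ∈ M → x ∈ Mᗮ → x = 0 := by
    intro x hx hx'
    have := hx' x hx
    rwa [inner_self_eq_zero] at this
  -- decomposition of U and V
  have hUle : U ≤ M ⊔ W := by
    intro u hu
    have hm : (M.orthogonalProjectionOnto u : H) ∈ M := (M.orthogonalProjectionOnto u).2
    have h1 : u - M.orthogonalProjectionOnto u ∈ Mᗮ :=
      M.sub_starProjection_mem_orthogonal u
    have h2 : u - M.orthogonalProjectionOnto u ∈ U :=
      Submodule.sub_mem U hu (hm.1)
    have : u = (M.orthogonalProjectionOnto u : H) + (u - M.orthogonalProjectionOnto u) := by abel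
    rw [this]
    exact Submodule.add_mem _ (Submodule.mem_sup_left hm)
      (Submodule.mem_sup_right (Submodule.mem_sup_left ⟨h2, h1⟩))
  have hVle : V ≤ M ⊔ W := by
    intro v hv
    have hm : (M.orthogonalProjectionOnto v : H) ∈ M := (M.orthogonalProjectionOnto v).2
    have h1 : v - M.orthogonalProjectionOnto v ∈ Mᗮ :=
      M.sub_starProjection_mem_orthogonal v
    have h2 : v - M.orthogonalProjectionOnto v ∈ V :=
      Submodule.sub_mem V hv (hm.2)
    have : v = (M.orthogonalProjectionOnto v : H) + (v - M.orthogonalProjectionOnto v) := by abel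
    rw [this]
    exact Submodule.add_mem _ (Submodule.mem_sup_left hm)
      (Submodule.mem_sup_right (Submodule.mem_sup_right ⟨h2, h1⟩))
  have hUV : U ⊔ V = M ⊔ W := by
    apply le_antisymm (sup_le hUle hVle)
    apply sup_le
    · exact le_trans inf_le_left le_sup_left
    · exact sup_le (le_trans inf_le_left le_sup_left)
        (le_trans inf_le_left le_sup_right)
  have hWeq : W = (U ⊔ V) ⊓ Mᗮ := by
    apply le_antisymm
    · exact le_inf (hUV ▸ le_sup_right) hWMo
    · rintro x ⟨hx1, hx2⟩
      rw [hUV] at hx1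
      obtain ⟨m, hm, w, hw, rfl⟩ := Submodule.mem_sup.mp hx1
      have : m = 0 := hMW0 m hm (by
        have : m = (m + w) - w := by abel
        rw [this]
        exact Submodule.sub_mem _ hx2 (hWMo hw))
      simpa [this] using hw
  -- basic facts about S
  have hS0 : (0:ℝ) ∈ S := by
    refine ⟨0, Submodule.zero_mem _, 0, Submodule.zero_mem _, by simp, by simp, by simp⟩
  have hSbdd : BddAbove S := by
    refine ⟨1, ?_⟩
    rintro r ⟨u, hu, v, hv, hu1, hv1, rfl⟩
    calc ‖⟪u,v⟫‖ ≤ ‖u‖ * ‖v‖ := norm_inner_le_norm u v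
    _ ≤ 1 * 1 := by
        apply mul_le_mul hu1 hv1 (norm_nonneg v) zero_le_one
    _ = 1 := by ring
  constructor
  · -- closedness implies the angle condition
    intro hclosed
    have hWc : IsClosed (W : Set H) := by
      have hcoe : (W : Set H) = ((U ⊔ V : Submodule ℂ H) : Set H) ∩ (Mᗮ : Set H) := by
        rw [hWeq, Submodule.coe_inf]
      rw [hcoe]
      exact hclosed.inter M.isClosed_orthogonal
    have hinj : ∀ x ∈ U', ∀ y ∈ V', x + y = 0 → x = 0 := by
      intro x hx y hy hxy
      have hxV : x ∈ V := by
        have : x = -y := by linear_combination (norm := abel) hxy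
        rw [this]
        exact V.neg_mem hy.1
      exact hMW0 x ⟨hx.1, hxV⟩ hx.2
    -- now run the argument
    obtain ⟨D, hD1, hlow⟩ : ∃ D : ℝ, 1 ≤ D ∧
        ∀ u ∈ U', ∀ v ∈ V', ‖u‖ = 1 → ‖v‖ = 1 → 1 ≤ D * ‖u - v‖ := by
      set W2 : Submodule ℂ H := U' ⊔ V' with hW2
      haveI : CompleteSpace U' := hU'c.completeSpace_coe
      haveI : CompleteSpace V' := hV'c.completeSpace_coe
      haveI : CompleteSpace W2 := hWc.completeSpace_coe
      set f0 : (U' × V') →L[ℂ] H :=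
        (U'.subtypeL.comp (ContinuousLinearMap.fst ℂ U' V')) +
          (V'.subtypeL.comp (ContinuousLinearMap.snd ℂ U' V')) with hf0def
      have hf0 : ∀ x : U' × V', f0 x = (x.1 : H) + (x.2 : H) := fun x => rfl
      have hf0W : ∀ x : U' × V', f0 x ∈ W2 := by
        intro x
        rw [hf0]
        exact Submodule.add_mem _ (Submodule.mem_sup_left x.1.2) (Submodule.mem_sup_right x.2.2)
      set f : (U' × V') →L[ℂ] W2 := f0.codRestrict W2 hf0W with hfdef
      have hker : LinearMap.ker (f : U' × V' →ₗ[ℂ] W2) = ⊥ := by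
        rw [LinearMap.ker_eq_bot']
        intro x hx
        have hx0 : (x.1 : H) + (x.2 : H) = 0 := by
          have : ((f x : W2) : H) = 0 := by rw [show f x = 0 from hx]; rfl
          rwa [ContinuousLinearMap.coe_codRestrict_apply, hf0] at this
        have h1 : (x.1 : H) = 0 := hinj _ x.1.2 _ x.2.2 hx0
        have h2 : (x.2 : H) = 0 := by rw [h1, zero_add] at hx0; exact hx0
        exact Prod.ext (Subtype.ext h1) (Subtype.ext h2)
      have hrange : LinearMap.range (f : U' × V' →ₗ[ℂ] W2) = ⊤ := by
        rw [LinearMap.range_eq_top]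
        rintro ⟨w, hw⟩
        obtain ⟨a, ha, b, hb, hab⟩ := Submodule.mem_sup.mp hw
        exact ⟨(⟨a, ha⟩, ⟨b, hb⟩), Subtype.ext
          (by rw [ContinuousLinearMap.coe_coe, ContinuousLinearMap.coe_codRestrict_apply, hf0]; exact hab)⟩
      set e := ContinuousLinearEquiv.ofBijective f hker hrange with hedef
      refine ⟨‖(e.symm : W2 →L[ℂ] (U' × V'))‖ + 1, ?_, ?_⟩
      · have := norm_nonneg (e.symm : W2 →L[ℂ] (U' × V'))
        linarith
      intro u hu v hv hu1 hv1
      set p : U' × V' := (⟨u, hu⟩, -⟨v, hv⟩) with hp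
      have hfp : (f p : H) = u - v := by
        show (f0 p : H) = u - v
        rw [hf0]
        simp [hp, sub_eq_add_neg]
      have hbound : ‖p‖ ≤ ‖(e.symm : W2 →L[ℂ] (U' × V'))‖ * ‖f p‖ := by
        have h := (e.symm : W2 →L[ℂ] (U' × V')).le_opNorm (f p)
        have hsymm : e.symm (f p) = p :=
          ContinuousLinearEquiv.ofBijective_symm_apply_apply f hker hrange p
        rwa [ContinuousLinearEquiv.coe_coe, hsymm] at h
      have hnp : ‖p‖ = 1 := by
        rw [hp, Prod.norm_def]
        simp only [norm_neg]
        rw [show ‖(⟨u, hu⟩ : U')‖ = 1 from hu1, show ‖(⟨v, hv⟩ : V')‖ = 1 from hv1]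
        simp
      have hfpn : ‖f p‖ = ‖u - v‖ := by rw [← hfp]; rfl
      rw [hnp, hfpn] at hbound
      calc (1:ℝ) ≤ ‖(e.symm : W2 →L[ℂ] (U' × V'))‖ * ‖u - v‖ := hbound
        _ ≤ (‖(e.symm : W2 →L[ℂ] (U' × V'))‖ + 1) * ‖u - v‖ := by
            apply mul_le_mul_of_nonneg_right (by linarith) (norm_nonneg _)
    -- now bound sSup S by B := 1 - 1/(2 D^2) < 1
    have hD0 : (0:ℝ) < D := lt_of_lt_of_le one_pos hD1
    set B : ℝ := 1 - 1 / (2 * D ^ 2) with hBdef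
    have hB1 : B < 1 := by
      have : 0 < 1 / (2 * D ^ 2) := by positivity
      rw [hBdef]; linarith
    have hB0 : 0 ≤ B := by
      have h2 : 1 ≤ D ^ 2 := by nlinarith
      have h3 : 1 / (2 * D ^ 2) ≤ 1 / 2 :=
        div_le_div_of_nonneg_left one_pos.le (by norm_num) (by linarith)
      rw [hBdef]; linarith
    have hSB : ∀ r ∈ S, r ≤ B := by
      rw [hS]
      rintro r ⟨u, hu, v, hv, hu1, hv1, rfl⟩
      rcases eq_or_ne (⟪u, v⟫ : ℂ) 0 with hz0 | hz0
      · rw [hz0]; simpa using hB0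
      have hu0 : u ≠ 0 := fun h => hz0 (by rw [h, inner_zero_left])
      have hv0 : v ≠ 0 := fun h => hz0 (by rw [h, inner_zero_right])
      have ha : 0 < ‖u‖ := norm_pos_iff.mpr hu0
      have hb : 0 < ‖v‖ := norm_pos_iff.mpr hv0
      set uh : H := ((‖u‖⁻¹ : ℝ) : ℂ) • u with huh
      set vh : H := ((‖v‖⁻¹ : ℝ) : ℂ) • v with hvh
      have huhn : ‖uh‖ = 1 := by
        rw [huh, norm_smul]
        simp [abs_of_pos (inv_pos.mpr ha), inv_mul_cancel₀ ha.ne']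
      have hvhn : ‖vh‖ = 1 := by
        rw [hvh, norm_smul]
        simp [abs_of_pos (inv_pos.mpr hb), inv_mul_cancel₀ hb.ne']
      set z : ℂ := ⟪uh, vh⟫ with hz
      have hzval : z = ((‖u‖⁻¹ : ℝ) : ℂ) * ((‖v‖⁻¹ : ℝ) : ℂ) * ⟪u, v⟫ := by
        rw [hz, huh, hvh, inner_smul_left, inner_smul_right, Complex.conj_ofReal]
        ring
      have hzne : z ≠ 0 := by
        rw [hzval]
        exact mul_ne_zero (mul_ne_zero (by simp [ha.ne']) (by simp [hb.ne'])) hz0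
      have hznorm : ‖z‖ = ‖u‖⁻¹ * ‖v‖⁻¹ * ‖⟪u, v⟫‖ := by
        rw [hzval, norm_mul, norm_mul, Complex.norm_real, Complex.norm_real,
          Real.norm_eq_abs, Real.norm_eq_abs, abs_of_pos (inv_pos.mpr ha), abs_of_pos (inv_pos.mpr hb)]
      have hzn0 : (0:ℝ) < ‖z‖ := norm_pos_iff.mpr hzne
      set w : H := ((starRingEnd ℂ) z / (‖z‖ : ℂ)) • vh with hwdef
      have hwmem : w ∈ V' := V'.smul_mem _ (V'.smul_mem _ hv)
      have hwn : ‖w‖ = 1 := by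
        rw [hwdef, norm_smul, hvhn, mul_one, norm_div, RCLike.norm_conj,
          Complex.norm_real, Real.norm_eq_abs, abs_of_pos hzn0, div_self hzn0.ne']
      have hinw : (⟪uh, w⟫ : ℂ) = ((‖z‖ : ℝ) : ℂ) := by
        have hzc : ((‖z‖ : ℝ) : ℂ) ≠ 0 := Complex.ofReal_ne_zero.mpr hzn0.ne'
        rw [hwdef, inner_smul_right, ← hz, div_mul_eq_mul_div]
        rw [show (starRingEnd ℂ) z * z = (((‖z‖ : ℝ) : ℂ)) * ((‖z‖ : ℝ) : ℂ) by
          rw [mul_comm, Complex.mul_conj]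
          rw [Complex.normSq_eq_norm_sq]
          push_cast
          ring]
        rw [mul_div_assoc, div_self hzc, mul_one]
      have hre : RCLike.re (⟪uh, w⟫ : ℂ) = ‖z‖ := by rw [hinw]; simp
      have hlow1 : 1 ≤ D * ‖uh - w‖ := hlow uh (U'.smul_mem _ hu) w hwmem huhn hwn
      have hsub : ‖uh - w‖ ^ 2 = 2 - 2 * ‖z‖ := by
        rw [@norm_sub_sq ℂ, hre, huhn, hwn]
        ring
      have hDub : 1 ≤ (D * ‖uh - w‖) ^ 2 := by nlinarith [norm_nonneg (uh - w)]
      have hzB : ‖z‖ ≤ B := by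
        rw [mul_pow, hsub] at hDub
        have hD2 : 0 < D ^ 2 := by positivity
        have hstep : 1 / (2 * D ^ 2) ≤ 1 - ‖z‖ := by
          rw [div_le_iff₀ (by positivity)]
          nlinarith
        rw [hBdef]
        linarith
      have hr : ‖⟪u, v⟫‖ ≤ ‖z‖ := by
        have h1 : (1:ℝ) ≤ ‖u‖⁻¹ := (one_le_inv₀ ha).mpr hu1
        have h2 : (1:ℝ) ≤ ‖v‖⁻¹ := (one_le_inv₀ hb).mpr hv1
        have h12 : (1:ℝ) ≤ ‖u‖⁻¹ * ‖v‖⁻¹ := by nlinarith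
        calc ‖⟪u, v⟫‖ = 1 * ‖⟪u, v⟫‖ := (one_mul _).symm
          _ ≤ (‖u‖⁻¹ * ‖v‖⁻¹) * ‖⟪u, v⟫‖ :=
              mul_le_mul_of_nonneg_right h12 (norm_nonneg _)
          _ = ‖z‖ := hznorm.symm
      exact le_trans hr hzB
    calc sSup S ≤ B := csSup_le ⟨0, hS0⟩ hSB
      _ < 1 := hB1
  · -- the angle condition implies closedness
    intro hc1
    have hSbdd' := hSbdd
    have key : ∀ u ∈ U', ∀ v ∈ V',
        ‖u‖ ≤ Real.toNNReal (Real.sqrt ((1 - sSup S)⁻¹)) * ‖u + v‖ ∧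
        ‖v‖ ≤ Real.toNNReal (Real.sqrt ((1 - sSup S)⁻¹)) * ‖u + v‖ := by
      set c := sSup S with hc
      have hc0 : 0 ≤ c := le_csSup hSbdd hS0
      -- the scaled Cauchy-Schwarz-type bound
      have hcs : ∀ u ∈ U', ∀ v ∈ V', ‖⟪u, v⟫‖ ≤ c * (‖u‖ * ‖v‖) := by
        intro u hu v hv
        rcases eq_or_ne u 0 with rfl | hu0
        · simp [hc0]
        rcases eq_or_ne v 0 with rfl | hv0
        · simp
        have ha : 0 < ‖u‖ := norm_pos_iff.mpr hu0
        have hb : 0 < ‖v‖ := norm_pos_iff.mpr hv0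
        set uh : H := ((‖u‖⁻¹ : ℝ) : ℂ) • u with huh
        set vh : H := ((‖v‖⁻¹ : ℝ) : ℂ) • v with hvh
        have huhn : ‖uh‖ = 1 := by
          rw [huh, norm_smul]
          simp [abs_of_pos (inv_pos.mpr ha), inv_mul_cancel₀ ha.ne']
        have hvhn : ‖vh‖ = 1 := by
          rw [hvh, norm_smul]
          simp [abs_of_pos (inv_pos.mpr hb), inv_mul_cancel₀ hb.ne']
        have hmem : ‖⟪uh, vh⟫‖ ∈ S := by
          rw [hS]
          exact ⟨uh, U'.smul_mem _ hu, vh, V'.smul_mem _ hv, le_of_eq huhn, le_of_eq hvhn, rfl⟩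
        have hle : ‖⟪uh, vh⟫‖ ≤ c := le_csSup hSbdd hmem
        have hinner : ‖⟪uh, vh⟫‖ = ‖u‖⁻¹ * ‖v‖⁻¹ * ‖⟪u, v⟫‖ := by
          rw [huh, hvh, inner_smul_left, inner_smul_right]
          simp [norm_mul, abs_of_pos (inv_pos.mpr ha), abs_of_pos (inv_pos.mpr hb), mul_assoc]
        rw [hinner] at hle
        calc ‖⟪u, v⟫‖ = (‖u‖ * ‖v‖) * (‖u‖⁻¹ * ‖v‖⁻¹ * ‖⟪u, v⟫‖) := by
              field_simp
            _ ≤ (‖u‖ * ‖v‖) * c := by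
              apply mul_le_mul_of_nonneg_left hle (by positivity)
            _ = c * (‖u‖ * ‖v‖) := by ring
      intro u hu v hv
      have h1c : 0 < 1 - c := by linarith
      have hsq : (1 - c) * (‖u‖ ^ 2 + ‖v‖ ^ 2) ≤ ‖u + v‖ ^ 2 := by
        have hn := @norm_add_sq ℂ _ _ _ _ u v
        have hre : -‖⟪u, v⟫‖ ≤ RCLike.re ⟪u, v⟫ :=
          (abs_le.mp (RCLike.abs_re_le_norm _)).1
        have hz := hcs u hu v hv
        nlinarith [sq_nonneg (‖u‖ - ‖v‖), norm_nonneg u, norm_nonneg v]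
      have hK : (Real.toNNReal (Real.sqrt ((1 - c)⁻¹)) : ℝ) = Real.sqrt ((1 - c)⁻¹) :=
        Real.coe_toNNReal _ (Real.sqrt_nonneg _)
      have key : ∀ a : ℝ, 0 ≤ a → a ^ 2 ≤ (1 - c)⁻¹ * ‖u + v‖ ^ 2 →
          a ≤ Real.sqrt ((1 - c)⁻¹) * ‖u + v‖ := by
        intro a ha h
        have := Real.sqrt_le_sqrt h
        rwa [Real.sqrt_sq ha, Real.sqrt_mul (by positivity), Real.sqrt_sq (norm_nonneg _)]
          at this
      have h2 : ‖u‖ ^ 2 + ‖v‖ ^ 2 ≤ (1 - c)⁻¹ * ‖u + v‖ ^ 2 := by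
        have := mul_le_mul_of_nonneg_left hsq (le_of_lt (inv_pos.mpr h1c))
        rwa [← mul_assoc, inv_mul_cancel₀ h1c.ne', one_mul] at this
      constructor
      · rw [hK]
        exact key _ (norm_nonneg _) (by nlinarith [sq_nonneg ‖v‖])
      · rw [hK]
        exact key _ (norm_nonneg _) (by nlinarith [sq_nonneg ‖u‖])
    have hWc : IsClosed (W : Set H) :=
      aux_closed_sup U' V' hU'c hV'c _ key
    have hMWkey : ∀ m ∈ M, ∀ w ∈ W,
        ‖m‖ ≤ ((1 : NNReal) : ℝ) * ‖m + w‖ ∧ ‖w‖ ≤ ((1 : NNReal) : ℝ) * ‖m + w‖ := by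
      intro m hm w hw
      have hip : (⟪m, w⟫ : ℂ) = 0 := (hWMo hw) m hm
      have hsq := @norm_add_sq ℂ _ _ _ _ m w
      rw [hip] at hsq
      simp only [map_zero, mul_zero, add_zero, NNReal.coe_one, one_mul] at hsq ⊢
      constructor
      · exact aux_sq_le (norm_nonneg _) (norm_nonneg _)
          (by nlinarith [sq_nonneg ‖w‖, sq_nonneg ‖m‖])
      · exact aux_sq_le (norm_nonneg _) (norm_nonneg _)
          (by nlinarith [sq_nonneg ‖w‖, sq_nonneg ‖m‖])
    have : IsClosed ((M ⊔ W : Submodule ℂ H) : Set H) :=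
      aux_closed_sup M W hMc hWc 1 hMWkey
    rw [hUV]
    exact this
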